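/- With the construction as in the context: if H is not nilpotent, then the topological entropy of 𝓕 is strictly larger than the topological entropy of 𝓖: h(𝓕) > h(𝓖). -/

import Mathlib

open Filter Topology

/-- `spaceTimePatterns F n t` is `R_F(n,t)`: the set of patterns on `[0,n) × [0,t)`
appearing in space-time diagrams of `F`, i.e. patterns `p` with `p(j,i) = F^i(c)_j`. -/
def spaceTimePatterns {C : Type*} (F : (ℕ → C) → (ℕ → C)) (n t : ℕ) :
    Set (Fin n → Fin t → C) :=
  { p | ∃ c : ℕ → C, ∀ (j : Fin n) (i : Fin t), p j i = F^[(i : ℕ)] c (j : ℕ) }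

/-- The topological entropy of a one-sided cellular automaton `F`:
`h(F) = lim_{n→∞} lim_{t→∞} (1/t)·log₂ |R_F(n,t)|` (both limits exist). -/
noncomputable def caEntropy {C : Type*} (F : (ℕ → C) → (ℕ → C)) : ℝ :=
  limUnder atTop fun n : ℕ =>
    limUnder atTop fun t : ℕ =>
      (1 / (t : ℝ)) * Real.logb 2 ((spaceTimePatterns F n t).ncard)

/-- The permutations `ρ_a` of `{0,1,2}`: `ρ_0 = ρ_2 = (1 2)` and `ρ_1 = (0 1 2)`
(i.e. `0↦1, 1↦2, 2↦0`).  `rho a x = ρ_a(x)`. -/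
def rho (a x : Fin 3) : Fin 3 :=
  if a = 1 then ![1, 2, 0] x else ![0, 2, 1] x

/-- The `2k`-fold direct product `zot_{2k}` of the cellular automaton `zot` acting
coordinatewise on `A^ℕ` with `A = {0,1,2}^{2k}`. -/
def zot2k (k : ℕ) (c : ℕ → (Fin (2 * k) → Fin 3)) : ℕ → (Fin (2 * k) → Fin 3) :=
  fun i j => rho (c (i + 1) j) (c i j)

/-- The cellular automaton `𝓖 = id_A × H` on `(A × B)^ℕ` with `A = {0,1,2}^{2k}`. -/
def calG {B : Type*} (k : ℕ) (H : (ℕ → B) → (ℕ → B))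
    (ce : ℕ → (Fin (2 * k) → Fin 3) × B) : ℕ → (Fin (2 * k) → Fin 3) × B :=
  fun i => ((ce i).1, H (fun m => (ce m).2) i)

/-- The cellular automaton `𝓕` on `(A × B)^ℕ` with `A = {0,1,2}^{2k}`: it acts as `H` on
the `B`-track, and on the `A`-track it acts as `zot_{2k}` where the `B`-track is not
going to become `q`, and as the identity where it is. -/
def calF {B : Type*} [DecidableEq B] (k : ℕ) (H : (ℕ → B) → (ℕ → B)) (q : B)
    (ce : ℕ → (Fin (2 * k) → Fin 3) × B) : ℕ → (Fin (2 * k) → Fin 3) × B :=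
  fun i =>
    (if H (fun m => (ce m).2) i = q then (ce i).1
      else zot2k k (fun m => (ce m).1) i,
     H (fun m => (ce m).2) i)

set_option linter.unusedSectionVars false
set_option maxHeartbeats 1000000

section Counting

variable {C : Type*} [Fintype C] [Nonempty C] (F : (ℕ → C) → (ℕ → C))

lemma stp_nonempty (n t : ℕ) : (spaceTimePatterns F n t).Nonempty :=
  ⟨fun j i => F^[(i:ℕ)] (fun _ => Classical.arbitrary C) (j:ℕ),
    fun _ => Classical.arbitrary C, fun _ _ => rfl⟩

lemma stp_finite (n t : ℕ) : (spaceTimePatterns F n t).Finite := Set.toFinite _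

lemma stp_ncard_pos (n t : ℕ) : 0 < (spaceTimePatterns F n t).ncard :=
  (Set.ncard_pos (stp_finite F n t)).2 (stp_nonempty F n t)

lemma ncard_prod {α β : Type*} (s : Set α) (t : Set β) :
    (s ×ˢ t).ncard = s.ncard * t.ncard := by
  rw [← Nat.card_coe_set_eq, ← Nat.card_coe_set_eq, ← Nat.card_coe_set_eq,
    Nat.card_congr (Equiv.Set.prod s t), Nat.card_prod]

lemma stp_card_add (n a b : ℕ) :
    (spaceTimePatterns F n (a + b)).ncard ≤
      (spaceTimePatterns F n a).ncard * (spaceTimePatterns F n b).ncard := by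
  classical
  set φ : (Fin n → Fin (a + b) → C) → (Fin n → Fin a → C) × (Fin n → Fin b → C) :=
    fun p => (fun j i => p j (Fin.castAdd b i), fun j i => p j (Fin.natAdd a i)) with hφ
  have hinj : Function.Injective φ := by
    intro p p' h
    funext j i
    refine Fin.addCases (fun i0 => ?_) (fun i0 => ?_) i
    · exact congrFun (congrFun (congrArg Prod.fst h) j) i0
    · exact congrFun (congrFun (congrArg Prod.snd h) j) i0
  have himg : φ '' (spaceTimePatterns F n (a + b)) ⊆
      (spaceTimePatterns F n a) ×ˢ (spaceTimePatterns F n b) := by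
    rintro _ ⟨p, ⟨c, hc⟩, rfl⟩
    constructor
    · refine ⟨c, fun j i => ?_⟩
      show p j (Fin.castAdd b i) = _
      simpa using hc j (Fin.castAdd b i)
    · refine ⟨F^[a] c, fun j i => ?_⟩
      show p j (Fin.natAdd a i) = _
      have := hc j (Fin.natAdd a i)
      simp only [Fin.coe_natAdd] at this
      rw [this, add_comm a (i:ℕ), Function.iterate_add_apply]
  calc (spaceTimePatterns F n (a + b)).ncard
      = (φ '' (spaceTimePatterns F n (a + b))).ncard :=
        (Set.ncard_image_of_injOn (hinj.injOn)).symm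
    _ ≤ ((spaceTimePatterns F n a) ×ˢ (spaceTimePatterns F n b)).ncard :=
        Set.ncard_le_ncard himg (((stp_finite F n a).prod (stp_finite F n b)))
    _ = _ := ncard_prod _ _

lemma stp_ncard_mono_t (n : ℕ) {t t' : ℕ} (h : t ≤ t') :
    (spaceTimePatterns F n t).ncard ≤ (spaceTimePatterns F n t').ncard := by
  classical
  set ψ : (Fin n → Fin t' → C) → (Fin n → Fin t → C) :=
    fun p j i => p j (Fin.castLE h i) with hψ
  have hsub : spaceTimePatterns F n t ⊆ ψ '' (spaceTimePatterns F n t') := by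
    rintro p ⟨c, hc⟩
    exact ⟨fun j i => F^[(i:ℕ)] c (j:ℕ), ⟨c, fun _ _ => rfl⟩,
      funext fun j => funext fun i => (hc j i).symm⟩
  calc (spaceTimePatterns F n t).ncard
      ≤ (ψ '' (spaceTimePatterns F n t')).ncard :=
        Set.ncard_le_ncard hsub ((stp_finite F n t').image _)
    _ ≤ (spaceTimePatterns F n t').ncard := Set.ncard_image_le (stp_finite F n t')

lemma stp_ncard_mono_n {n n' : ℕ} (h : n ≤ n') (t : ℕ) :
    (spaceTimePatterns F n t).ncard ≤ (spaceTimePatterns F n' t).ncard := by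
  classical
  set ψ : (Fin n' → Fin t → C) → (Fin n → Fin t → C) :=
    fun p j i => p (Fin.castLE h j) i with hψ
  have hsub : spaceTimePatterns F n t ⊆ ψ '' (spaceTimePatterns F n' t) := by
    rintro p ⟨c, hc⟩
    exact ⟨fun j i => F^[(i:ℕ)] c (j:ℕ), ⟨c, fun _ _ => rfl⟩,
      funext fun j => funext fun i => (hc j i).symm⟩
  calc (spaceTimePatterns F n t).ncard
      ≤ (ψ '' (spaceTimePatterns F n' t)).ncard :=
        Set.ncard_le_ncard hsub ((stp_finite F n' t).image _)
    _ ≤ (spaceTimePatterns F n' t).ncard := Set.ncard_image_le (stp_finite F n' t)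

/-- The inner entropy value `lim_t (1/t) log₂ |R_F(n,t)|`. -/
noncomputable def hInner (n : ℕ) : ℝ :=
  sInf ((fun t : ℕ => Real.logb 2 ((spaceTimePatterns F n t).ncard) / t) '' Set.Ici 1)

lemma stpu_subadditive (n : ℕ) :
    Subadditive (fun t => Real.logb 2 ((spaceTimePatterns F n t).ncard)) := by
  intro a b
  have h1 := stp_card_add F n a b
  have pa : (0:ℝ) < ((spaceTimePatterns F n a).ncard : ℝ) := by
    exact_mod_cast stp_ncard_pos F n a
  have pb : (0:ℝ) < ((spaceTimePatterns F n b).ncard : ℝ) := by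
    exact_mod_cast stp_ncard_pos F n b
  have pab : (0:ℝ) < ((spaceTimePatterns F n (a+b)).ncard : ℝ) := by
    exact_mod_cast stp_ncard_pos F n (a + b)
  calc Real.logb 2 ((spaceTimePatterns F n (a+b)).ncard)
      ≤ Real.logb 2 (((spaceTimePatterns F n a).ncard : ℝ) *
          ((spaceTimePatterns F n b).ncard : ℝ)) := by
        apply Real.logb_le_logb_of_le (by norm_num) pab
        exact_mod_cast h1
    _ = _ := Real.logb_mul (ne_of_gt pa) (ne_of_gt pb)

lemma stpu_nonneg (n t : ℕ) : 0 ≤ Real.logb 2 ((spaceTimePatterns F n t).ncard) :=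
  Real.logb_nonneg (by norm_num) (by exact_mod_cast stp_ncard_pos F n t)

lemma stpu_bddBelow (n : ℕ) :
    BddBelow (Set.range fun t : ℕ =>
      Real.logb 2 ((spaceTimePatterns F n t).ncard) / t) := by
  refine ⟨0, ?_⟩
  rintro x ⟨t, rfl⟩
  exact div_nonneg (stpu_nonneg F n t) (Nat.cast_nonneg t)

lemma hInner_tendsto (n : ℕ) :
    Tendsto (fun t : ℕ => Real.logb 2 ((spaceTimePatterns F n t).ncard) / t)
      atTop (𝓝 (hInner F n)) :=
  by have h := (stpu_subadditive F n).tendsto_lim (stpu_bddBelow F n)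
     rw [Subadditive.lim] at h; exact h

end Counting

section Limits

variable {C : Type*} [Fintype C] [Nonempty C] (F : (ℕ → C) → (ℕ → C))

/-- radius-1 locality: iterates are determined by an initial segment. -/
lemma iterate_local
    (hrad : ∀ (c c' : ℕ → C) (j : ℕ), c j = c' j → c (j+1) = c' (j+1) → F c j = F c' j) :
    ∀ (t m : ℕ) (c c' : ℕ → C), (∀ j, j ≤ m + t → c j = c' j) →
      ∀ j ≤ m, F^[t] c j = F^[t] c' j := by
  intro t
  induction t with
  | zero => intro m c c' h j hj; simpa using h j (by omega)
  | succ t ih =>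
    intro m c c' h j hj
    rw [Function.iterate_succ_apply, Function.iterate_succ_apply]
    refine ih m (F c) (F c') (fun l hl => ?_) j hj
    exact hrad c c' l (h l (by omega)) (h (l+1) (by omega))

lemma hInner_mono (n : ℕ) : hInner F n ≤ hInner F (n + 1) := by
  refine le_of_tendsto_of_tendsto' (hInner_tendsto F n) (hInner_tendsto F (n+1)) fun t => ?_
  refine div_le_div_of_nonneg_right ?_ (Nat.cast_nonneg t)
  apply Real.logb_le_logb_of_le (by norm_num)
  · exact_mod_cast stp_ncard_pos F n t
  · exact_mod_cast stp_ncard_mono_n F (Nat.le_succ n) t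

lemma hInner_le_logb {n a b : ℕ} (ha : 1 ≤ a) (hb : 1 ≤ b)
    (hcard : ∀ t, (spaceTimePatterns F n t).ncard ≤ a * b ^ t) :
    hInner F n ≤ Real.logb 2 b := by
  have hlim : Tendsto (fun t : ℕ => Real.logb 2 a / t + Real.logb 2 b) atTop
      (𝓝 (Real.logb 2 b)) := by
    have h0 : Tendsto (fun t : ℕ => Real.logb 2 a / t) atTop (𝓝 0) :=
      tendsto_const_div_atTop_nhds_zero_nat _
    simpa using h0.add tendsto_const_nhds
  refine le_of_tendsto_of_tendsto (hInner_tendsto F n) hlim ?_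
  filter_upwards [eventually_ge_atTop 1] with t ht
  have hpos : (0:ℝ) < t := by exact_mod_cast ht
  have h1 : Real.logb 2 ((spaceTimePatterns F n t).ncard) ≤
      Real.logb 2 a + t * Real.logb 2 b := by
    have hub : ((spaceTimePatterns F n t).ncard : ℝ) ≤ (a : ℝ) * (b:ℝ) ^ t := by
      exact_mod_cast hcard t
    calc Real.logb 2 ((spaceTimePatterns F n t).ncard)
        ≤ Real.logb 2 ((a:ℝ) * (b:ℝ) ^ t) := by
          apply Real.logb_le_logb_of_le (by norm_num)
          · exact_mod_cast stp_ncard_pos F n t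
          · exact hub
      _ = Real.logb 2 a + Real.logb 2 ((b:ℝ) ^ t) := by
          apply Real.logb_mul
          · positivity
          · positivity
      _ = Real.logb 2 a + t * Real.logb 2 b := by rw [Real.logb_pow]
  calc Real.logb 2 ((spaceTimePatterns F n t).ncard) / t
      ≤ (Real.logb 2 a + t * Real.logb 2 b) / t := by
        exact div_le_div_of_nonneg_right h1 hpos.le
    _ = Real.logb 2 a / t + Real.logb 2 b := by field_simp
end Limits

section Limits2

variable {C : Type*} [Fintype C] [Nonempty C] (F : (ℕ → C) → (ℕ → C))

lemma le_hInner {n K : ℕ}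
    (hcard : ∀ m : ℕ, 2 ^ (K * m) ≤ (spaceTimePatterns F n (2 * m)).ncard) :
    (K : ℝ) / 2 ≤ hInner F n := by
  have hlim : Tendsto (fun t : ℕ => (K : ℝ) / 2 - ((K:ℝ)/2) / t) atTop (𝓝 ((K:ℝ)/2)) := by
    have h0 : Tendsto (fun t : ℕ => ((K:ℝ)/2) / t) atTop (𝓝 0) :=
      tendsto_const_div_atTop_nhds_zero_nat _
    simpa using tendsto_const_nhds.sub h0
  refine le_of_tendsto_of_tendsto hlim (hInner_tendsto F n) ?_
  filter_upwards [eventually_ge_atTop 1] with t ht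
  have hpos : (0:ℝ) < t := by exact_mod_cast ht
  have h1 : (K : ℝ) * (t / 2 : ℕ) ≤ Real.logb 2 ((spaceTimePatterns F n t).ncard) := by
    have hc : (2:ℕ) ^ (K * (t/2)) ≤ (spaceTimePatterns F n t).ncard :=
      le_trans (hcard (t/2)) (stp_ncard_mono_t F n (by omega))
    calc (K : ℝ) * (t / 2 : ℕ) = Real.logb 2 ((2:ℝ) ^ (K * (t/2))) := by
          rw [Real.logb_pow, Real.logb_self_eq_one (by norm_num)]
          push_cast; ring_nf
      _ ≤ _ := by
          apply Real.logb_le_logb_of_le (by norm_num) (by positivity)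
          exact_mod_cast hc
  have h2 : ((t:ℝ) - 1) / 2 ≤ ((t / 2 : ℕ) : ℝ) := by
    have : t - 1 ≤ 2 * (t/2) := by omega
    have h3 : ((t:ℝ) - 1) = ((t - 1 : ℕ) : ℝ) := by
      have : (1:ℕ) ≤ t := ht
      push_cast [this]; ring
    rw [h3]
    rw [div_le_iff₀ (by norm_num)]
    exact_mod_cast (by omega : t - 1 ≤ (t/2) * 2)
  have h4 : (K:ℝ)/2 - ((K:ℝ)/2)/t = ((K:ℝ) * (((t:ℝ) - 1)/2)) / t := by
    field_simp
  calc (K:ℝ)/2 - ((K:ℝ)/2)/t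
      = ((K:ℝ) * (((t:ℝ) - 1)/2)) / t := h4
    _ ≤ ((K:ℝ) * ((t/2 : ℕ) : ℝ)) / t :=
        div_le_div_of_nonneg_right
          (mul_le_mul_of_nonneg_left h2 (Nat.cast_nonneg K)) hpos.le
    _ ≤ Real.logb 2 ((spaceTimePatterns F n t).ncard) / t :=
        div_le_div_of_nonneg_right h1 hpos.le

noncomputable def caEntropyAux : ℝ := ⨆ n, hInner F n

lemma hInner_bddAbove
    (hrad : ∀ (c c' : ℕ → C) (j : ℕ), c j = c' j → c (j+1) = c' (j+1) → F c j = F c' j) :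
    BddAbove (Set.range fun n => hInner F n) := by
  classical
  refine ⟨Real.logb 2 (Fintype.card C), ?_⟩
  rintro x ⟨n, rfl⟩
  refine hInner_le_logb F (n := n) (a := Fintype.card C ^ n) (b := Fintype.card C)
    (Nat.one_le_pow _ _ Fintype.card_pos) Fintype.card_pos ?_
  intro t
  -- locality bound: pattern determined by the first n + t cells
  set g : (Fin (n + t) → C) → (Fin n → Fin t → C) := fun w j i =>
    F^[(i:ℕ)] (fun l => if h : l < n + t then w ⟨l, h⟩ else Classical.arbitrary C) (j:ℕ)
    with hg
  have hsub : spaceTimePatterns F n t ⊆ g '' Set.univ := by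
    rintro p ⟨c, hc⟩
    refine ⟨fun l => c (l:ℕ), trivial, ?_⟩
    funext j i
    rw [hc j i, hg]
    refine (iterate_local F hrad (i:ℕ) (j:ℕ) _ c (fun l hl => ?_) (j:ℕ) le_rfl)
    have hlt : l < n + t := by
      have := i.isLt; have := j.isLt; omega
    simp [hlt]
  calc (spaceTimePatterns F n t).ncard ≤ (g '' Set.univ).ncard :=
        Set.ncard_le_ncard hsub (Set.toFinite _)
    _ ≤ (Set.univ : Set (Fin (n + t) → C)).ncard := Set.ncard_image_le (Set.toFinite _)
    _ = Fintype.card C ^ (n + t) := by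
        rw [Set.ncard_univ, Nat.card_eq_fintype_card, Fintype.card_fun]
        simp
    _ ≤ Fintype.card C ^ n * Fintype.card C ^ t := by rw [pow_add]

lemma caEntropy_eq_iSup
    (hrad : ∀ (c c' : ℕ → C) (j : ℕ), c j = c' j → c (j+1) = c' (j+1) → F c j = F c' j) :
    caEntropy F = ⨆ n, hInner F n := by
  have hfun : (fun n : ℕ => limUnder atTop fun t : ℕ =>
      (1 / (t : ℝ)) * Real.logb 2 ((spaceTimePatterns F n t).ncard)) =
      fun n => hInner F n := by
    funext n
    have : (fun t : ℕ => (1 / (t : ℝ)) * Real.logb 2 ((spaceTimePatterns F n t).ncard)) =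
        fun t : ℕ => Real.logb 2 ((spaceTimePatterns F n t).ncard) / t := by
      funext t; rw [one_div, mul_comm, div_eq_mul_inv]
    rw [this]
    exact (hInner_tendsto F n).limUnder_eq
  unfold caEntropy
  rw [hfun]
  refine Filter.Tendsto.limUnder_eq ?_
  exact tendsto_atTop_ciSup (monotone_nat_of_le_succ (hInner_mono F)) (hInner_bddAbove F hrad)

end Limits2

/-- single-track zot -/
def zot1 (c : ℕ → Fin 3) : ℕ → Fin 3 := fun i => rho (c (i + 1)) (c i)

/-- decoded value on diagonal of parity `s % 2` from a bit -/
def zdec (s : ℕ) (b : Bool) : Fin 3 := if b then (if s % 2 = 0 then 1 else 2) else 0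

/-- the bit-valued space-time diagram -/
def zbeta (d : ℕ → Bool) : ℕ → ℕ → Bool
  | 0, i => if i % 2 = 0 then d (i / 2) else false
  | t+1, i => if (t + 1 + i) % 2 = 0 then xor (zbeta d t i) (zbeta d t (i + 1)) else zbeta d t i

/-- the configuration encoding the bit sequence `d` -/
def zcd (d : ℕ → Bool) : ℕ → Fin 3 := fun i => zdec i (zbeta d 0 i)

lemma zot_zcd (d : ℕ → Bool) : ∀ t i, zot1^[t] (zcd d) i = zdec (t + i) (zbeta d t i) := by
  intro t
  induction t with
  | zero => intro i; simp [zcd]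
  | succ t ih =>
    intro i
    rw [Function.iterate_succ_apply']
    show rho (zot1^[t] (zcd d) (i + 1)) (zot1^[t] (zcd d) i) = _
    rw [ih (i + 1), ih i]
    rcases Nat.mod_two_eq_zero_or_one (t + i) with h | h
    · have h1 : (t + (i + 1)) % 2 = 1 := by omega
      have h2 : (t + 1 + i) % 2 = 1 := by omega
      rw [show zbeta d (t+1) i = zbeta d t i by simp [zbeta, h2]]
      cases hb1 : zbeta d t i <;> cases hb2 : zbeta d t (i+1) <;>
        simp [zdec, h, h1, h2] <;> rfl
    · have h1 : (t + (i + 1)) % 2 = 0 := by omega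
      have h2 : (t + 1 + i) % 2 = 0 := by omega
      rw [show zbeta d (t+1) i = xor (zbeta d t i) (zbeta d t (i+1)) by simp [zbeta, h2]]
      cases hb1 : zbeta d t i <;> cases hb2 : zbeta d t (i+1) <;>
        simp [zdec, h, h1, h2] <;> rfl

lemma xor_cancel_left' (x a b : Bool) : xor (xor x a) (xor x b) = xor a b := by
  cases x <;> cases a <;> cases b <;> rfl

lemma zbeta_diff : ∀ (t i : ℕ) (d d' : ℕ → Bool),
    (∀ j, i ≤ j → j < i + t → zbeta d 0 j = zbeta d' 0 j) →
    ((t + i) % 2 = 0 →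
      xor (zbeta d t i) (zbeta d' t i) = xor (zbeta d 0 (i + t)) (zbeta d' 0 (i + t)))
    ∧ ((t + i) % 2 = 1 → zbeta d t i = zbeta d' t i) := by
  intro t
  induction t with
  | zero =>
    intro i d d' _
    constructor
    · intro _; simp [zbeta]
    · intro h; have hi : i % 2 = 1 := by omega
      simp [zbeta, hi]
  | succ t ih =>
    intro i d d' hagree
    constructor
    · intro hpar
      have hodd : (t + i) % 2 = 1 := by omega
      have hd : zbeta d (t+1) i = xor (zbeta d t i) (zbeta d t (i+1)) := by
        simp [zbeta, hpar]
      have hd' : zbeta d' (t+1) i = xor (zbeta d' t i) (zbeta d' t (i+1)) := by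
        simp [zbeta, hpar]
      have heq : zbeta d t i = zbeta d' t i :=
        (ih i d d' (fun j h1 h2 => hagree j h1 (by omega))).2 hodd
      rw [hd, hd', heq, xor_cancel_left']
      have h2 := (ih (i+1) d d' (fun j h1 h2 => hagree j (by omega) (by omega))).1
        (by omega : (t + (i + 1)) % 2 = 0)
      rw [show i + (t + 1) = (i + 1) + t by ring]
      exact h2
    · intro hpar
      have heven : (t + i) % 2 = 0 := by omega
      have hd : zbeta d (t+1) i = zbeta d t i := by
        simp [zbeta, show (t + 1 + i) % 2 ≠ 0 by omega]
      have hd' : zbeta d' (t+1) i = zbeta d' t i := by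
        simp [zbeta, show (t + 1 + i) % 2 ≠ 0 by omega]
      have h2 := (ih i d d' (fun j h1 h2 => hagree j h1 (by omega))).1 heven
      have h3 : zbeta d 0 (i + t) = zbeta d' 0 (i + t) :=
        hagree (i + t) (by omega) (by omega)
      rw [hd, hd']
      have := h2.trans (by rw [h3, Bool.xor_self])
      cases hx : zbeta d t i <;> cases hy : zbeta d' t i <;>
        simp [hx, hy] at this ⊢
    
lemma zdec_inj (s : ℕ) {a b : Bool} (h : zdec s a = zdec s b) : a = b := by
  rcases Nat.mod_two_eq_zero_or_one s with hs | hs <;>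
    cases a <;> cases b <;> simp [zdec, hs] at h ⊢ <;> exact h

/-- columns of zot determine the encoded bits -/
lemma zcd_column_inj (d d' : ℕ → Bool) (m : ℕ)
    (hcol : ∀ i < 2 * m, zot1^[i] (zcd d) 0 = zot1^[i] (zcd d') 0) :
    ∀ l < m, d l = d' l := by
  intro l hl
  induction l using Nat.strong_induction_on with
  | _ l ihl =>
  have hagree : ∀ j, 0 ≤ j → j < 0 + 2 * l → zbeta d 0 j = zbeta d' 0 j := by
    intro j _ hj
    show zbeta d 0 j = zbeta d' 0 j
    rcases Nat.mod_two_eq_zero_or_one j with hj2 | hj2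
    · have : j / 2 < l := by omega
      simp [zbeta, hj2, ihl (j/2) this (by omega)]
    · simp [zbeta, hj2]
  have hpar : (2 * l + 0) % 2 = 0 := by omega
  have h1 := (zbeta_diff (2 * l) 0 d d' hagree).1 hpar
  have hcols : zot1^[2*l] (zcd d) 0 = zot1^[2*l] (zcd d') 0 := hcol (2*l) (by omega)
  rw [zot_zcd d (2*l) 0, zot_zcd d' (2*l) 0] at hcols
  have hbeq : zbeta d (2*l) 0 = zbeta d' (2*l) 0 := zdec_inj _ hcols
  rw [hbeq, Bool.xor_self] at h1
  rw [zero_add] at h1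
  have h2 : zbeta d 0 (2*l) = zbeta d' 0 (2*l) := by
    cases hx : zbeta d 0 (2*l) <;> cases hy : zbeta d' 0 (2*l) <;>
      simp [hx, hy] at h1 ⊢
  have h3 : (2 * l) % 2 = 0 := by omega
  simpa [zbeta, h3, show (2*l)/2 = l by omega] using h2

section Main

variable {B : Type*} [Fintype B] [DecidableEq B]
variable (H : (ℕ → B) → (ℕ → B)) (f : B → B → B) (q : B)

lemma H_shift (hf : ∀ c i, H c i = f (c i) (c (i + 1))) (n : ℕ) (c : ℕ → B) (j : ℕ) :
    H^[n] (fun m => c (m + j)) = fun i => H^[n] c (i + j) := by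
  induction n with
  | zero => rfl
  | succ n ih =>
    rw [Function.iterate_succ_apply', Function.iterate_succ_apply', ih]
    funext i
    rw [hf, hf]
    rw [show i + 1 + j = i + j + 1 by ring]

lemma H_persist (hf : ∀ c i, H c i = f (c i) (c (i + 1)))
    (hq : ∀ a b : B, a = q ∨ b = q → f a b = q)
    {n : ℕ} {c : ℕ → B} {j : ℕ} (h : H^[n] c j = q) : H^[n + 1] c j = q := by
  rw [Function.iterate_succ_apply', hf]
  exact hq _ _ (Or.inl h)

lemma H_move (hf : ∀ c i, H c i = f (c i) (c (i + 1)))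
    (hq : ∀ a b : B, a = q ∨ b = q → f a b = q)
    {n : ℕ} {c : ℕ → B} {j : ℕ} (h : H^[n] c (j + 1) = q) : H^[n + 1] c j = q := by
  rw [Function.iterate_succ_apply', hf]
  exact hq _ _ (Or.inr h)

lemma H_to_zero (hf : ∀ c i, H c i = f (c i) (c (i + 1)))
    (hq : ∀ a b : B, a = q ∨ b = q → f a b = q) :
    ∀ (j n : ℕ) (c : ℕ → B), H^[n] c j = q → H^[n + j] c 0 = q := by
  intro j
  induction j with
  | zero => intro n c h; simpa using h
  | succ j ih =>
    intro n c h
    have h1 : H^[n + 1] c j = q := H_move H f q hf hq h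
    have h2 := ih (n + 1) c h1
    rw [show n + (j + 1) = n + 1 + j by ring]
    exact h2

lemma H_persist_ge (hf : ∀ c i, H c i = f (c i) (c (i + 1)))
    (hq : ∀ a b : B, a = q ∨ b = q → f a b = q)
    {n m : ℕ} (hnm : n ≤ m) {c : ℕ → B} (h : H^[n] c 0 = q) : H^[m] c 0 = q := by
  induction m, hnm using Nat.le_induction with
  | base => exact h
  | succ m _ ih => exact H_persist H f q hf hq ih

lemma H_rad (hf : ∀ c i, H c i = f (c i) (c (i + 1))) :
    ∀ (c c' : ℕ → B) (j : ℕ), c j = c' j → c (j + 1) = c' (j + 1) → H c j = H c' j := by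
  intro c c' j h1 h2
  rw [hf, hf, h1, h2]

lemma exists_never_q (hf : ∀ c i, H c i = f (c i) (c (i + 1)))
    (hq : ∀ a b : B, a = q ∨ b = q → f a b = q)
    (hnotnil : ¬ ∃ q' : B, (H (fun _ => q') = fun _ => q') ∧
        ∀ c, ∃ n : ℕ, H^[n] c = fun _ => q') :
    ∃ e : ℕ → B, ∀ (n j : ℕ), H^[n] e j ≠ q := by
  haveI : Nonempty B := ⟨q⟩
  by_contra hcon
  push_neg at hcon
  classical
  letI : TopologicalSpace B := ⊥
  haveI : DiscreteTopology B := ⟨rfl⟩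
  set U : ℕ → Set (ℕ → B) := fun N => {e | H^[N] e 0 = q} with hU
  have hUopen : ∀ N, IsOpen (U N) := by
    intro N
    have hcont : Continuous fun e : ℕ → B => (fun l : Fin (N + 1) => e (l : ℕ)) :=
      continuous_pi fun l => continuous_apply _
    have hset : U N = (fun e : ℕ → B => (fun l : Fin (N + 1) => e (l : ℕ))) ⁻¹'
        {w : Fin (N + 1) → B |
          H^[N] (fun m => if h : m < N + 1 then w ⟨m, h⟩ else q) 0 = q} := by
      ext e
      have hloc : H^[N] (fun m => if h : m < N + 1 then e m else q) 0 = H^[N] e 0 := by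
        refine iterate_local H (H_rad H f hf) N 0 _ _ (fun l hl => ?_) 0 le_rfl
        simp [show l < N + 1 by omega]
      simp only [Set.mem_preimage, Set.mem_setOf_eq, hU]
      rw [hloc]
    rw [hset]
    exact (isOpen_discrete _).preimage hcont
  have hcover : (Set.univ : Set (ℕ → B)) ⊆ ⋃ N, U N := by
    intro e _
    obtain ⟨n, j, hnj⟩ := hcon e
    exact Set.mem_iUnion.2 ⟨n + j, H_to_zero H f q hf hq j n e hnj⟩
  obtain ⟨s, hs⟩ := isCompact_univ.elim_finite_subcover U hUopen hcover
  set N := s.sup id with hN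
  have hall : ∀ e : ℕ → B, H^[N] e 0 = q := by
    intro e
    obtain ⟨a, ha, hae⟩ := Set.mem_iUnion₂.1 (hs (Set.mem_univ e))
    exact H_persist_ge H f q hf hq (Finset.le_sup (f := id) ha) hae
  have hall' : ∀ (e : ℕ → B) (j : ℕ), H^[N] e j = q := by
    intro e j
    have h1 := hall (fun m => e (m + j))
    rw [H_shift H f hf] at h1
    simpa using h1
  exact hnotnil ⟨q, funext fun i => by rw [hf]; exact hq _ _ (Or.inl rfl),
    fun c => ⟨N, funext fun j => hall' c j⟩⟩

lemma zot2k_iter (k : ℕ) :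
    ∀ (t : ℕ) (c : ℕ → Fin (2 * k) → Fin 3) (i : ℕ) (j : Fin (2 * k)),
      (zot2k k)^[t] c i j = zot1^[t] (fun m => c m j) i := by
  intro t
  induction t with
  | zero => intros; rfl
  | succ t ih =>
    intro c i j
    rw [Function.iterate_succ_apply, Function.iterate_succ_apply]
    rw [ih (zot2k k c) i j]
    rfl

lemma calG_iter (k : ℕ) :
    ∀ (s : ℕ) (ce : ℕ → (Fin (2 * k) → Fin 3) × B) (i : ℕ),
      (calG k H)^[s] ce i = ((ce i).1, H^[s] (fun m => (ce m).2) i) := by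
  intro s
  induction s with
  | zero => intros; rfl
  | succ s ih =>
    intro ce i
    rw [Function.iterate_succ_apply, ih (calG k H ce) i]
    show ((ce i).1, H^[s] (H (fun m => (ce m).2)) i) = _
    rw [← Function.iterate_succ_apply]

lemma calF_iter (k : ℕ) {e : ℕ → B} (he : ∀ (s i : ℕ), H^[s] e i ≠ q) :
    ∀ (s : ℕ) (c : ℕ → Fin (2 * k) → Fin 3),
      (calF k H q)^[s] (fun m => (c m, e m)) =
        fun i => ((zot2k k)^[s] c i, H^[s] e i) := by
  intro s
  induction s with
  | zero => intros; rfl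
  | succ s ih =>
    intro c
    rw [Function.iterate_succ_apply', ih c]
    funext i
    show (if H (fun m => H^[s] e m) i = q then (zot2k k)^[s] c i
        else zot2k k (fun m => (zot2k k)^[s] c m) i,
      H (fun m => H^[s] e m) i) = _
    have hHe : H (fun m => H^[s] e m) i = H^[s + 1] e i := by
      rw [Function.iterate_succ_apply']
    rw [hHe, if_neg (he (s + 1) i)]
    have : zot2k k (fun m => (zot2k k)^[s] c m) i = (zot2k k)^[s + 1] c i := by
      rw [Function.iterate_succ_apply']
    rw [this]

end Main

section Main2

variable {B : Type*} [Fintype B] [DecidableEq B]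

lemma calG_card (H : (ℕ → B) → (ℕ → B)) (f : B → B → B) (q : B) (k : ℕ)
    (hf : ∀ c i, H c i = f (c i) (c (i + 1))) (n t : ℕ) :
    (spaceTimePatterns (calG k H) n t).ncard ≤
      (3 ^ (2 * k * n) * Fintype.card B ^ n) * Fintype.card B ^ t := by
  haveI : Nonempty B := ⟨q⟩
  classical
  set g : (Fin n → (Fin (2 * k) → Fin 3)) × (Fin (n + t) → B) →
      (Fin n → Fin t → ((Fin (2 * k) → Fin 3) × B)) := fun wv j i =>
    (wv.1 j, H^[(i : ℕ)] (fun m => if h : m < n + t then wv.2 ⟨m, h⟩ else q) (j : ℕ))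
    with hg
  have hsub : spaceTimePatterns (calG k H) n t ⊆ g '' Set.univ := by
    rintro p ⟨ce, hc⟩
    refine ⟨(fun j => (ce (j : ℕ)).1, fun l => (ce (l : ℕ)).2), trivial, ?_⟩
    funext j i
    rw [hc j i, calG_iter H k]
    have hloc : H^[(i:ℕ)] (fun m => if h : m < n + t then (ce m).2 else q) (j:ℕ) =
        H^[(i:ℕ)] (fun m => (ce m).2) (j:ℕ) := by
      refine iterate_local H (H_rad H f hf) (i:ℕ) (j:ℕ) _ _ (fun l hl => ?_) (j:ℕ) le_rfl
      have : l < n + t := by have := i.isLt; have := j.isLt; omega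
      simp [this]
    rw [hg]
    show ((ce (j:ℕ)).1, H^[(i:ℕ)] (fun m => if h : m < n + t then (ce m).2 else q) (j:ℕ))
      = ((ce (j:ℕ)).1, H^[(i:ℕ)] (fun m => (ce m).2) (j:ℕ))
    rw [hloc]
  calc (spaceTimePatterns (calG k H) n t).ncard
      ≤ (g '' Set.univ).ncard := Set.ncard_le_ncard hsub (Set.toFinite _)
    _ ≤ (Set.univ : Set ((Fin n → (Fin (2 * k) → Fin 3)) × (Fin (n + t) → B))).ncard :=
        Set.ncard_image_le (Set.toFinite _)
    _ = Fintype.card ((Fin n → (Fin (2 * k) → Fin 3)) × (Fin (n + t) → B)) := by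
        rw [Set.ncard_univ, Nat.card_eq_fintype_card]
    _ = (3 ^ (2 * k)) ^ n * Fintype.card B ^ (n + t) := by
        rw [Fintype.card_prod, Fintype.card_fun, Fintype.card_fun, Fintype.card_fun]
        simp
    _ = (3 ^ (2 * k * n) * Fintype.card B ^ n) * Fintype.card B ^ t := by
        rw [← pow_mul, pow_add]; ring

lemma calF_card (H : (ℕ → B) → (ℕ → B)) (q : B) (k : ℕ)
    {e : ℕ → B} (he : ∀ (s i : ℕ), H^[s] e i ≠ q) (m : ℕ) :
    2 ^ (2 * k * m) ≤ (spaceTimePatterns (calF k H q) 1 (2 * m)).ncard := by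
  haveI : Nonempty B := ⟨q⟩
  classical
  set dext : (Fin m → Fin (2 * k) → Bool) → Fin (2 * k) → ℕ → Bool :=
    fun D j s => if h : s < m then D ⟨s, h⟩ j else false with hdext
  set cD : (Fin m → Fin (2 * k) → Bool) → ℕ → (Fin (2 * k) → Fin 3) :=
    fun D l j => zcd (dext D j) l with hcD
  set Φ : (Fin m → Fin (2 * k) → Bool) →
      (Fin 1 → Fin (2 * m) → ((Fin (2 * k) → Fin 3) × B)) := fun D j i =>
    (calF k H q)^[(i : ℕ)] (fun l => (cD D l, e l)) (j : ℕ) with hΦ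
  have hrange : Set.range Φ ⊆ spaceTimePatterns (calF k H q) 1 (2 * m) := by
    rintro _ ⟨D, rfl⟩
    exact ⟨fun l => (cD D l, e l), fun j i => rfl⟩
  have hinj : Function.Injective Φ := by
    intro D D' h
    funext l j
    have hcol : ∀ i < 2 * m, zot1^[i] (zcd (dext D j)) 0 = zot1^[i] (zcd (dext D' j)) 0 := by
      intro i hi
      have h0 := congrFun (congrFun h (0 : Fin 1)) (⟨i, hi⟩ : Fin (2 * m))
      rw [hΦ] at h0
      simp only at h0
      rw [calF_iter H q k he, calF_iter H q k he] at h0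
      have h1 : (zot2k k)^[i] (cD D) 0 = (zot2k k)^[i] (cD D') 0 :=
        congrArg Prod.fst h0
      have h2 := congrFun h1 j
      rw [zot2k_iter k i (cD D) 0 j, zot2k_iter k i (cD D') 0 j] at h2
      exact h2
    have := zcd_column_inj (dext D j) (dext D' j) m hcol l l.isLt
    simpa [hdext, l.isLt] using this
  calc (2:ℕ) ^ (2 * k * m) = Fintype.card (Fin m → Fin (2 * k) → Bool) := by
        simp [Fintype.card_fun, ← pow_mul]
    _ = (Set.univ : Set (Fin m → Fin (2 * k) → Bool)).ncard := by
        rw [Set.ncard_univ, Nat.card_eq_fintype_card]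
    _ = (Φ '' Set.univ).ncard := (Set.ncard_image_of_injOn hinj.injOn).symm
    _ ≤ (spaceTimePatterns (calF k H q) 1 (2 * m)).ncard := by
        refine Set.ncard_le_ncard ?_ (stp_finite _ _ _)
        rw [Set.image_univ]; exact hrange

theorem calF_entropy_gt_calG' (H : (ℕ → B) → (ℕ → B)) (f : B → B → B)
    (hf : ∀ c i, H c i = f (c i) (c (i + 1)))
    (q : B) (hq : ∀ a b : B, a = q ∨ b = q → f a b = q)
    (k : ℕ) (hk : Real.logb 2 (Fintype.card B) < (k : ℝ))
    (hnotnil : ¬ ∃ q' : B, (H (fun _ => q') = fun _ => q') ∧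
        ∀ c, ∃ n : ℕ, H^[n] c = fun _ => q') :
    caEntropy (calG k H) < caEntropy (calF k H q) := by
  classical
  haveI : Nonempty B := ⟨q⟩
  obtain ⟨e, he⟩ := exists_never_q H f q hf hq hnotnil
  have hradG : ∀ (c c' : ℕ → (Fin (2 * k) → Fin 3) × B) (j : ℕ),
      c j = c' j → c (j + 1) = c' (j + 1) → calG k H c j = calG k H c' j := by
    intro c c' j h1 h2
    have e1 : (c j).1 = (c' j).1 := congrArg Prod.fst h1
    show ((c j).1, H (fun m => (c m).2) j) = ((c' j).1, H (fun m => (c' m).2) j)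
    rw [hf, hf, e1, congrArg Prod.snd h1, congrArg Prod.snd h2]
  have hradF : ∀ (c c' : ℕ → (Fin (2 * k) → Fin 3) × B) (j : ℕ),
      c j = c' j → c (j + 1) = c' (j + 1) → calF k H q c j = calF k H q c' j := by
    intro c c' j h1 h2
    have e1 : (c j).1 = (c' j).1 := congrArg Prod.fst h1
    have e2 : (c (j+1)).1 = (c' (j+1)).1 := congrArg Prod.fst h2
    have hH : H (fun m => (c m).2) j = H (fun m => (c' m).2) j := by
      rw [hf, hf, congrArg Prod.snd h1, congrArg Prod.snd h2]
    have hz : zot2k k (fun m => (c m).1) j = zot2k k (fun m => (c' m).1) j := by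
      funext jj
      show rho ((c (j+1)).1 jj) ((c j).1 jj) = rho ((c' (j+1)).1 jj) ((c' j).1 jj)
      rw [e1, e2]
    show (if H (fun m => (c m).2) j = q then (c j).1 else zot2k k (fun m => (c m).1) j,
        H (fun m => (c m).2) j) =
      (if H (fun m => (c' m).2) j = q then (c' j).1 else zot2k k (fun m => (c' m).1) j,
        H (fun m => (c' m).2) j)
    rw [hH, e1, hz]
  have hGsup := caEntropy_eq_iSup (calG k H) hradG
  have hFsup := caEntropy_eq_iSup (calF k H q) hradF
  have hGle : caEntropy (calG k H) ≤ Real.logb 2 (Fintype.card B) := by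
    rw [hGsup]
    refine ciSup_le fun n => ?_
    refine hInner_le_logb (calG k H) (n := n)
      (a := 3 ^ (2 * k * n) * Fintype.card B ^ n) (b := Fintype.card B)
      (Nat.one_le_iff_ne_zero.2 (by positivity)) Fintype.card_pos ?_
    exact calG_card H f q k hf n
  have hFge : (k : ℝ) ≤ caEntropy (calF k H q) := by
    rw [hFsup]
    have h1 : ((2 * k : ℕ) : ℝ) / 2 ≤ hInner (calF k H q) 1 :=
      le_hInner (calF k H q) (fun m => calF_card H q k he m)
    have h2 : ((2 * k : ℕ) : ℝ) / 2 = (k : ℝ) := by push_cast; ring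
    calc (k : ℝ) = ((2 * k : ℕ) : ℝ) / 2 := h2.symm
      _ ≤ hInner (calF k H q) 1 := h1
      _ ≤ ⨆ n, hInner (calF k H q) n := le_ciSup (hInner_bddAbove _ hradF) 1
  exact lt_of_le_of_lt hGle (lt_of_lt_of_le hk hFge)

end Main2

/-- With the construction as above (H a one-sided CA with radius-1 local rule `f` and
spreading quiescent state `q`, and `k > log₂|B|`): if `H` is not nilpotent, then
`h(𝓕) > h(𝓖)`. -/
theorem calF_entropy_gt_calG {B : Type*} [Fintype B] [DecidableEq B]
    (H : (ℕ → B) → (ℕ → B)) (f : B → B → B)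
    (hf : ∀ c i, H c i = f (c i) (c (i + 1)))
    (q : B) (hq : ∀ a b : B, a = q ∨ b = q → f a b = q)
    (k : ℕ) (hk : Real.logb 2 (Fintype.card B) < (k : ℝ))
    (hnotnil : ¬ ∃ q' : B, (H (fun _ => q') = fun _ => q') ∧
        ∀ c, ∃ n : ℕ, H^[n] c = fun _ => q') :
    caEntropy (calG k H) < caEntropy (calF k H q) :=
  calF_entropy_gt_calG' H f hf q hq k hk hnotnil
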